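/- Let n ≥ 2, let K, L ∈ 𝒦₀(ℝⁿ), and let q ∈ ℝ with |q| > n. Then |Ṽ_q(K) + Ṽ_q(L) − 2·Ṽ_q(K∩L)| = |Dₙ| · ∫_{S^{n−1}} |ρ_K(u)^q − ρ_L(u)^q| dσ(u) = (|q|/n) · ∫_{K△L} ‖x‖^{q−n} dx, and if q > n the quantity Ṽ_q(K) + Ṽ_q(L) − 2·Ṽ_q(K∩L) is itself nonnegative. -/

import Mathlib

open MeasureTheory

/-- The uniform (rotation invariant) probability measure `σ` on the unit sphere
`S^{n-1} ⊆ ℝⁿ`. -/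
noncomputable def sphereProb (n : ℕ) :
    Measure (Metric.sphere (0 : EuclideanSpace ℝ (Fin n)) 1) :=
  ((volume : Measure (EuclideanSpace ℝ (Fin n))).toSphere Set.univ)⁻¹ •
    (volume : Measure (EuclideanSpace ℝ (Fin n))).toSphere

/-- The radial function `ρ_K(u) = max {r : r • u ∈ K}` of a set `K ⊆ ℝⁿ`. -/
noncomputable def radialFn {n : ℕ} (K : Set (EuclideanSpace ℝ (Fin n)))
    (u : EuclideanSpace ℝ (Fin n)) : ℝ :=
  sSup {r : ℝ | r • u ∈ K}

/-- The Lebesgue volume `|Dₙ|` of the closed Euclidean unit ball in `ℝⁿ`. -/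
noncomputable def unitBallVolume (n : ℕ) : ℝ :=
  (volume (Metric.closedBall (0 : EuclideanSpace ℝ (Fin n)) 1)).toReal

/-- The `q`-th dual volume `Ṽ_q(K) = |Dₙ| ∫_{S^{n-1}} ρ_K(u)^q dσ(u)` for `|q| > n`. -/
noncomputable def dualVolHigh (n : ℕ) (q : ℝ) (K : Set (EuclideanSpace ℝ (Fin n))) : ℝ :=
  unitBallVolume n * ∫ u : Metric.sphere (0 : EuclideanSpace ℝ (Fin n)) 1,
    radialFn K ↑u ^ q ∂(sphereProb n)


open Set Metric
open scoped ENNReal NNReal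

namespace Stmt5Aux


theorem pointwise_rpow (a b : ℝ) (ha : 0 < a) (hb : 0 < b) {q : ℝ} (hq : q ≠ 0) :
    a ^ q + b ^ q - 2 * (min a b) ^ q = (if 0 < q then 1 else -1) * |a ^ q - b ^ q| := by
  rcases le_total a b with h | h <;> rcases lt_or_ge 0 q with h' | h'
  · rw [min_eq_left h, if_pos h',
      abs_of_nonpos (sub_nonpos.2 (Real.rpow_le_rpow ha.le h h'.le))]; ring
  · rw [min_eq_left h, if_neg (not_lt.2 h'),
      abs_of_nonneg (sub_nonneg.2 (Real.rpow_le_rpow_of_nonpos ha h h'))]; ring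
  · rw [min_eq_right h, if_pos h',
      abs_of_nonneg (sub_nonneg.2 (Real.rpow_le_rpow hb.le h h'.le))]; ring
  · rw [min_eq_right h, if_neg (not_lt.2 h'),
      abs_of_nonpos (sub_nonpos.2 (Real.rpow_le_rpow_of_nonpos hb h h'))]; ring

theorem ratio_rpow (a b : ℝ) (ha : 0 < a) (hb : 0 < b) {q : ℝ} (hq : q ≠ 0) :
    ((max a b) ^ q - (min a b) ^ q) / q = |a ^ q - b ^ q| / |q| := by
  rcases le_total a b with h | h <;> rcases lt_or_ge 0 q with h' | h'
  · rw [max_eq_right h, min_eq_left h, abs_of_pos h',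
      abs_of_nonpos (sub_nonpos.2 (Real.rpow_le_rpow ha.le h h'.le))]; ring_nf
  · rcases lt_of_le_of_ne h' hq with h''
    rw [max_eq_right h, min_eq_left h, abs_of_neg (lt_of_le_of_ne h' hq),
      abs_of_nonneg (sub_nonneg.2 (Real.rpow_le_rpow_of_nonpos ha h h'))]
    rw [div_eq_div_iff (lt_of_le_of_ne h' hq).ne (neg_ne_zero.2 hq)]; ring
  · rw [max_eq_left h, min_eq_right h, abs_of_pos h',
      abs_of_nonneg (sub_nonneg.2 (Real.rpow_le_rpow hb.le h h'.le))]
  · rw [max_eq_left h, min_eq_right h, abs_of_neg (lt_of_le_of_ne h' hq),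
      abs_of_nonpos (sub_nonpos.2 (Real.rpow_le_rpow_of_nonpos hb h h'))]
    rw [div_eq_div_iff (lt_of_le_of_ne h' hq).ne (neg_ne_zero.2 hq)]; ring


variable {n : ℕ}
local notation "E" => EuclideanSpace ℝ (Fin n)


theorem radialFn_spec {K : Set E} (hKcp : IsCompact K) (hKcv : Convex ℝ K)
    (hKint : 0 ∈ interior K) {u : E} (hu : ‖u‖ = 1) :
    0 < radialFn K u ∧ radialFn K u • u ∈ K ∧
      ∀ r : ℝ, 0 ≤ r → (r • u ∈ K ↔ r ≤ radialFn K u) := by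
  obtain ⟨R, hR⟩ := hKcp.isBounded.subset_closedBall 0
  obtain ⟨δ, hδ, hδK⟩ := Metric.mem_nhds_iff.mp (mem_interior_iff_mem_nhds.mp hKint)
  have h0K : (0 : E) ∈ K := interior_subset hKint
  set s : Set ℝ := {r : ℝ | r • u ∈ K} with hs
  have hrad : radialFn K u = sSup s := rfl
  have hs_closed : IsClosed s := hKcp.isClosed.preimage (continuous_id.smul continuous_const)
  have hbdd : BddAbove s := by
    refine ⟨R, fun r hr => ?_⟩
    have h1 := hR hr
    rw [Metric.mem_closedBall, dist_zero_right, norm_smul, hu, mul_one] at h1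
    exact (le_abs_self r).trans h1
  have hhalf : (δ/2 : ℝ) ∈ s := by
    apply hδK
    rw [Metric.mem_ball, dist_zero_right, norm_smul, hu, mul_one, Real.norm_eq_abs,
      abs_of_nonneg (by positivity)]
    linarith
  have hne : s.Nonempty := ⟨δ/2, hhalf⟩
  have hmem : sSup s ∈ s := hs_closed.csSup_mem hne hbdd
  have hpos : 0 < radialFn K u := by
    rw [hrad]
    exact lt_of_lt_of_le (by positivity) (le_csSup hbdd hhalf)
  rw [hrad] at hpos ⊢
  refine ⟨hpos, hmem, fun r hr => ⟨fun h => le_csSup hbdd h, fun h => ?_⟩⟩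
  have heq : r • u = (r / sSup s) • (sSup s • u) := by
    rw [smul_smul, div_mul_cancel₀ _ hpos.ne']
  rw [heq]
  exact hKcv.smul_mem_of_zero_mem h0K hmem
    ⟨by positivity, by rw [div_le_one hpos]; exact h⟩

theorem gauge_eq_radialFn_inv {K : Set E} (hKcp : IsCompact K) (hKcv : Convex ℝ K)
    (hKint : 0 ∈ interior K) {u : E} (hu : ‖u‖ = 1) :
    gauge K u = (radialFn K u)⁻¹ := by
  obtain ⟨hpos, hmem, hiff⟩ := radialFn_spec hKcp hKcv hKint hu
  have hnhds : K ∈ nhds (0 : E) := mem_interior_iff_mem_nhds.mp hKint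
  set ρ := radialFn K u
  have h1 : ρ * gauge K u ≤ 1 := by
    have := gauge_le_one_of_mem hmem
    rwa [gauge_smul_of_nonneg hpos.le, smul_eq_mul] at this
  have h2 : ρ⁻¹ ≤ gauge K u := by
    by_contra hc
    push_neg at hc
    rcases eq_or_lt_of_le (gauge_nonneg u) with hg | hg
    · -- gauge = 0
      have hK : (ρ + 1) • u ∈ K := by
        rw [← hKcp.isClosed.closure_eq, ← gauge_le_one_iff_mem_closure hKcv hnhds,
          gauge_smul_of_nonneg (by positivity), smul_eq_mul, ← hg]
        norm_num
      have := (hiff (ρ + 1) (by positivity)).mp hK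
      linarith
    · set t := (ρ + (gauge K u)⁻¹) / 2 with ht
      have hgρ : gauge K u * ρ < 1 := by
        calc gauge K u * ρ < ρ⁻¹ * ρ := mul_lt_mul_of_pos_right hc hpos
          _ = 1 := inv_mul_cancel₀ hpos.ne'
      have hkey : ρ < (gauge K u)⁻¹ := by
        have h4 := mul_lt_mul_of_pos_left hgρ (inv_pos.2 hg)
        rwa [← mul_assoc, inv_mul_cancel₀ hg.ne', one_mul, mul_one] at h4
      have hρt : ρ < t := by rw [ht]; linarith
      have htg : t * gauge K u < 1 := by
        have h3 : t < (gauge K u)⁻¹ := by rw [ht]; linarith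
        calc t * gauge K u < (gauge K u)⁻¹ * gauge K u := by
              exact mul_lt_mul_of_pos_right h3 hg
          _ = 1 := inv_mul_cancel₀ hg.ne'
      have hK : t • u ∈ K := by
        rw [← hKcp.isClosed.closure_eq, ← gauge_le_one_iff_mem_closure hKcv hnhds,
          gauge_smul_of_nonneg (by positivity), smul_eq_mul]
        exact htg.le
      have := (hiff t (by positivity)).mp hK
      linarith
  have h1' : gauge K u ≤ ρ⁻¹ := by
    rw [← one_div, le_div_iff₀ hpos]
    linarith [mul_comm ρ (gauge K u)]
  linarith

theorem radialFn_pos {K : Set E} (hKcp : IsCompact K) (hKcv : Convex ℝ K)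
    (hKint : 0 ∈ interior K) {u : E} (hu : ‖u‖ = 1) : 0 < radialFn K u :=
  (radialFn_spec hKcp hKcv hKint hu).1

theorem continuous_radialFn_sphere {K : Set E} (hKcp : IsCompact K) (hKcv : Convex ℝ K)
    (hKint : 0 ∈ interior K) :
    Continuous fun u : sphere (0 : E) 1 => radialFn K (u : E) := by
  have hnhds : K ∈ nhds (0 : E) := mem_interior_iff_mem_nhds.mp hKint
  have heq : (fun u : sphere (0 : E) 1 => radialFn K (u : E))
      = fun u : sphere (0 : E) 1 => (gauge K (u : E))⁻¹ := by
    funext u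
    rw [gauge_eq_radialFn_inv hKcp hKcv hKint (norm_eq_of_mem_sphere u), inv_inv]
  rw [heq]
  refine ((continuous_gauge hKcv hnhds).comp continuous_subtype_val).inv₀ fun u => ?_
  simp only [Function.comp_apply]
  rw [gauge_eq_radialFn_inv hKcp hKcv hKint (norm_eq_of_mem_sphere u)]
  exact inv_ne_zero (radialFn_pos hKcp hKcv hKint (norm_eq_of_mem_sphere u)).ne'

theorem radialFn_inter {K L : Set E} (hKcp : IsCompact K) (hKcv : Convex ℝ K)
    (hKint : 0 ∈ interior K) (hLcp : IsCompact L) (hLcv : Convex ℝ L)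
    (hLint : 0 ∈ interior L) {u : E} (hu : ‖u‖ = 1) :
    radialFn (K ∩ L) u = min (radialFn K u) (radialFn L u) := by
  have hint : (0 : E) ∈ interior (K ∩ L) := by
    rw [interior_inter]; exact ⟨hKint, hLint⟩
  obtain ⟨hpos, hmem, hiff⟩ :=
    radialFn_spec (hKcp.inter hLcp) (hKcv.inter hLcv) hint hu
  obtain ⟨hposK, hmemK, hiffK⟩ := radialFn_spec hKcp hKcv hKint hu
  obtain ⟨hposL, hmemL, hiffL⟩ := radialFn_spec hLcp hLcv hLint hu
  apply le_antisymm
  · exact le_min ((hiffK _ hpos.le).mp hmem.1) ((hiffL _ hpos.le).mp hmem.2)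
  · refine (hiff _ (le_min hposK.le hposL.le)).mp
      ⟨(hiffK _ (le_min hposK.le hposL.le)).mpr (min_le_left _ _),
       (hiffL _ (le_min hposK.le hposL.le)).mpr (min_le_right _ _)⟩


theorem smul_mem_symmDiff_iff {K L : Set E} (hKcp : IsCompact K) (hKcv : Convex ℝ K)
    (hKint : 0 ∈ interior K) (hLcp : IsCompact L) (hLcv : Convex ℝ L)
    (hLint : 0 ∈ interior L) {u : E} (hu : ‖u‖ = 1) {t : ℝ} (ht : 0 < t) :
    t • u ∈ symmDiff K L ↔
      t ∈ Ioc (min (radialFn K u) (radialFn L u)) (max (radialFn K u) (radialFn L u)) := by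
  obtain ⟨-, -, hiffK⟩ := radialFn_spec hKcp hKcv hKint hu
  obtain ⟨-, -, hiffL⟩ := radialFn_spec hLcp hLcv hLint hu
  rw [Set.mem_symmDiff, hiffK t ht.le, hiffL t ht.le, mem_Ioc]
  rcases le_total (radialFn K u) (radialFn L u) with h | h
  · rw [min_eq_left h, max_eq_right h]
    constructor
    · rintro (⟨h1, h2⟩ | ⟨h1, h2⟩) <;> push_neg at h2 <;> exact ⟨by linarith, by linarith⟩
    · rintro ⟨h1, h2⟩; exact Or.inr ⟨h2, not_le.2 h1⟩
  · rw [min_eq_right h, max_eq_left h]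
    constructor
    · rintro (⟨h1, h2⟩ | ⟨h1, h2⟩) <;> push_neg at h2 <;> exact ⟨by linarith, by linarith⟩
    · rintro ⟨h1, h2⟩; exact Or.inl ⟨h2, not_le.2 h1⟩

theorem inner_integral {K L : Set E} (hn : 2 ≤ n) (hKcp : IsCompact K) (hKcv : Convex ℝ K)
    (hKint : 0 ∈ interior K) (hLcp : IsCompact L) (hLcv : Convex ℝ L)
    (hLint : 0 ∈ interior L) {q : ℝ} (hq : q ≠ 0) (u : Metric.sphere (0 : E) 1) :
    ∫⁻ r : Ioi (0:ℝ), (symmDiff K L).indicator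
        (fun x : E => ENNReal.ofReal (‖x‖ ^ (q - (n:ℝ)))) ((r : ℝ) • (u : E))
        ∂(Measure.volumeIoiPow (n - 1))
      = ENNReal.ofReal (|radialFn K (u:E) ^ q - radialFn L (u:E) ^ q| / |q|) := by
  have hu : ‖(u:E)‖ = 1 := norm_eq_of_mem_sphere u
  have hposK := radialFn_pos hKcp hKcv hKint hu
  have hposL := radialFn_pos hLcp hLcv hLint hu
  set a := radialFn K (u:E) with ha
  set b := radialFn L (u:E) with hb
  set m := min a b with hmdef
  set M := max a b with hMdef
  have hm : 0 < m := lt_min hposK hposL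
  have hmM : m ≤ M := min_le_max
  have hA : MeasurableSet (symmDiff K L) := by
    rw [Set.symmDiff_def]
    exact (hKcp.isClosed.measurableSet.diff hLcp.isClosed.measurableSet).union
      (hLcp.isClosed.measurableSet.diff hKcp.isClosed.measurableSet)
  have hf : Measurable fun x : E => ENNReal.ofReal (‖x‖ ^ (q - (n:ℝ))) :=
    (measurable_norm.pow_const (q - (n:ℝ))).ennreal_ofReal
  have hw : Measurable fun r : Ioi (0:ℝ) => ENNReal.ofReal ((r:ℝ) ^ (n-1)) :=
    (measurable_subtype_coe.pow_const _).ennreal_ofReal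
  have hg : Measurable fun r : Ioi (0:ℝ) => (symmDiff K L).indicator
      (fun x : E => ENNReal.ofReal (‖x‖ ^ (q - (n:ℝ)))) ((r : ℝ) • (u : E)) :=
    (hf.indicator hA).comp (measurable_subtype_coe.smul_const _)
  have h0notin : (0:ℝ) ∉ uIcc m M := by
    rw [uIcc_of_le hmM]
    exact fun hc => (not_le.2 hm) hc.1
  have hInt : IntegrableOn (fun t : ℝ => t ^ (q-1)) (Ioc m M) volume :=
    (intervalIntegral.intervalIntegrable_rpow (Or.inr h0notin)).1
  have hnn : 0 ≤ᵐ[volume.restrict (Ioc m M)] fun t : ℝ => t ^ (q-1) := by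
    filter_upwards [ae_restrict_mem measurableSet_Ioc] with t ht
    exact Real.rpow_nonneg (le_of_lt (hm.trans ht.1)) _
  calc
    ∫⁻ r : Ioi (0:ℝ), (symmDiff K L).indicator
        (fun x : E => ENNReal.ofReal (‖x‖ ^ (q - (n:ℝ)))) ((r : ℝ) • (u : E))
        ∂(Measure.volumeIoiPow (n - 1))
        = ∫⁻ r : Ioi (0:ℝ), (fun t : ℝ => ENNReal.ofReal (t ^ (n-1)) *
            (symmDiff K L).indicator
              (fun x : E => ENNReal.ofReal (‖x‖ ^ (q - (n:ℝ)))) (t • (u : E))) (r : ℝ)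
            ∂(Measure.comap Subtype.val volume) := by
          rw [Measure.volumeIoiPow]
          exact lintegral_withDensity_eq_lintegral_mul _ hw hg
    _ = ∫⁻ t in Ioi (0:ℝ), ENNReal.ofReal (t ^ (n-1)) *
            (symmDiff K L).indicator
              (fun x : E => ENNReal.ofReal (‖x‖ ^ (q - (n:ℝ)))) (t • (u : E)) ∂volume :=
          lintegral_subtype_comap measurableSet_Ioi
            (fun t : ℝ => ENNReal.ofReal (t ^ (n-1)) * (symmDiff K L).indicator
              (fun x : E => ENNReal.ofReal (‖x‖ ^ (q - (n:ℝ)))) (t • (u:E)))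
    _ = ∫⁻ t in Ioi (0:ℝ), (Ioc m M).indicator
            (fun t : ℝ => ENNReal.ofReal (t ^ (q-1))) t ∂volume := by
          refine setLIntegral_congr_fun measurableSet_Ioi (fun t ht => ?_)
          have ht' : (0:ℝ) < t := ht
          have hmemIff : t • (u:E) ∈ symmDiff K L ↔ t ∈ Ioc m M :=
            smul_mem_symmDiff_iff hKcp hKcv hKint hLcp hLcv hLint hu ht'
          by_cases htm : t ∈ Ioc m M
          · rw [Set.indicator_of_mem (hmemIff.mpr htm), Set.indicator_of_mem htm,
              norm_smul, hu, mul_one, Real.norm_eq_abs, abs_of_pos ht',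
              ← ENNReal.ofReal_mul (pow_nonneg ht'.le _)]
            congr 1
            rw [← Real.rpow_natCast t (n-1), ← Real.rpow_add ht']
            congr 1
            have hcast : ((n - 1 : ℕ) : ℝ) = (n:ℝ) - 1 := by
              rw [Nat.cast_sub (by omega : 1 ≤ n), Nat.cast_one]
            rw [hcast]; ring
          · rw [Set.indicator_of_notMem (fun hc => htm (hmemIff.mp hc)),
              Set.indicator_of_notMem htm, mul_zero]
    _ = ∫⁻ t in Ioc m M, ENNReal.ofReal (t ^ (q-1)) ∂volume := by
          have hss : Ioc m M ∩ Ioi (0:ℝ) = Ioc m M :=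
            inter_eq_left.mpr fun t ht => hm.trans ht.1
          rw [lintegral_indicator measurableSet_Ioc, Measure.restrict_restrict
            measurableSet_Ioc, hss]
    _ = ENNReal.ofReal (∫ t in Ioc m M, t ^ (q-1) ∂volume) :=
          (ofReal_integral_eq_lintegral_ofReal hInt hnn).symm
    _ = ENNReal.ofReal (|a ^ q - b ^ q| / |q|) := by
          rw [← intervalIntegral.integral_of_le hmM,
            integral_rpow (Or.inr ⟨fun hc => hq (by linarith), h0notin⟩),
            sub_add_cancel, ratio_rpow a b hposK hposL hq]


theorem isProbability_sphereProb (hn : 1 ≤ n) : IsProbabilityMeasure (sphereProb n) := by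
  constructor
  rw [sphereProb, Measure.smul_apply, smul_eq_mul]
  refine ENNReal.inv_mul_cancel ?_ (measure_ne_top _ _)
  rw [Measure.toSphere_apply_univ, finrank_euclideanSpace_fin]
  exact mul_ne_zero (Nat.cast_ne_zero.2 (by omega)) (measure_ball_pos volume 0 one_pos).ne'

end Stmt5Aux

set_option maxHeartbeats 1000000 in
/-- For convex bodies `K, L ⊆ ℝⁿ` (`n ≥ 2`) containing the origin in their interiors and
`|q| > n`:
`|Ṽ_q(K) + Ṽ_q(L) - 2Ṽ_q(K∩L)| = |Dₙ| ∫_{S^{n-1}} |ρ_K^q - ρ_L^q| dσ`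
`= (|q|/n) ∫_{K △ L} ‖x‖^{q-n} dx`, and the dual volume deviation is nonnegative
when `q > n`. -/
theorem stmt5 {n : ℕ} (hn : 2 ≤ n)
    (K L : Set (EuclideanSpace ℝ (Fin n)))
    (hKcp : IsCompact K) (hKcv : Convex ℝ K) (hKint : 0 ∈ interior K)
    (hLcp : IsCompact L) (hLcv : Convex ℝ L) (hLint : 0 ∈ interior L)
    (q : ℝ) (hq : (n : ℝ) < |q|) :
    |dualVolHigh n q K + dualVolHigh n q L - 2 * dualVolHigh n q (K ∩ L)|
      = unitBallVolume n * ∫ u : Metric.sphere (0 : EuclideanSpace ℝ (Fin n)) 1,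
          |radialFn K ↑u ^ q - radialFn L ↑u ^ q| ∂(sphereProb n)
    ∧ unitBallVolume n * (∫ u : Metric.sphere (0 : EuclideanSpace ℝ (Fin n)) 1,
          |radialFn K ↑u ^ q - radialFn L ↑u ^ q| ∂(sphereProb n))
      = (|q| / (n : ℝ)) * ∫ x in symmDiff K L, ‖x‖ ^ (q - (n : ℝ))
    ∧ ((n : ℝ) < q →
        0 ≤ dualVolHigh n q K + dualVolHigh n q L - 2 * dualVolHigh n q (K ∩ L)) := by
  classical
  have hnR : (0:ℝ) < n := by exact_mod_cast (by omega : 0 < n)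
  have hq0 : q ≠ 0 := by
    intro h; rw [h, abs_zero] at hq; linarith
  have hqabs : (0:ℝ) < |q| := lt_of_le_of_lt hnR.le hq
  have hfr : Module.finrank ℝ (EuclideanSpace ℝ (Fin n)) = n := finrank_euclideanSpace_fin
  haveI : Nontrivial (EuclideanSpace ℝ (Fin n)) :=
    Module.nontrivial_of_finrank_pos (R := ℝ) (by rw [hfr]; omega)
  haveI : IsProbabilityMeasure (sphereProb n) :=
    Stmt5Aux.isProbability_sphereProb (by omega)
  have huS : ∀ u : Metric.sphere (0 : EuclideanSpace ℝ (Fin n)) 1,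
      ‖(u : EuclideanSpace ℝ (Fin n))‖ = 1 := fun u => norm_eq_of_mem_sphere u
  have hposK : ∀ u : Metric.sphere (0 : EuclideanSpace ℝ (Fin n)) 1,
      0 < radialFn K (u : EuclideanSpace ℝ (Fin n)) :=
    fun u => Stmt5Aux.radialFn_pos hKcp hKcv hKint (huS u)
  have hposL : ∀ u : Metric.sphere (0 : EuclideanSpace ℝ (Fin n)) 1,
      0 < radialFn L (u : EuclideanSpace ℝ (Fin n)) :=
    fun u => Stmt5Aux.radialFn_pos hLcp hLcv hLint (huS u)
  have hcontK := Stmt5Aux.continuous_radialFn_sphere hKcp hKcv hKint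
  have hcontL := Stmt5Aux.continuous_radialFn_sphere hLcp hLcv hLint
  set fa : Metric.sphere (0 : EuclideanSpace ℝ (Fin n)) 1 → ℝ :=
    fun u => radialFn K (u : EuclideanSpace ℝ (Fin n)) ^ q with hfa_def
  set fb : Metric.sphere (0 : EuclideanSpace ℝ (Fin n)) 1 → ℝ :=
    fun u => radialFn L (u : EuclideanSpace ℝ (Fin n)) ^ q with hfb_def
  set fc : Metric.sphere (0 : EuclideanSpace ℝ (Fin n)) 1 → ℝ :=
    fun u => radialFn (K ∩ L) (u : EuclideanSpace ℝ (Fin n)) ^ q with hfc_def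
  have hfaC : Continuous fa := hcontK.rpow_const fun u => Or.inl (hposK u).ne'
  have hfbC : Continuous fb := hcontL.rpow_const fun u => Or.inl (hposL u).ne'
  have hfcC : Continuous fc := by
    have : fc = fun u : Metric.sphere (0 : EuclideanSpace ℝ (Fin n)) 1 =>
        (min (radialFn K (u : EuclideanSpace ℝ (Fin n)))
          (radialFn L (u : EuclideanSpace ℝ (Fin n)))) ^ q := by
      funext u
      show radialFn (K ∩ L) (u : EuclideanSpace ℝ (Fin n)) ^ q = _
      rw [Stmt5Aux.radialFn_inter hKcp hKcv hKint hLcp hLcv hLint (huS u)]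
    rw [this]
    exact (hcontK.min hcontL).rpow_const fun u => Or.inl (lt_min (hposK u) (hposL u)).ne'
  have hfaI : Integrable fa (sphereProb n) :=
    hfaC.integrable_of_hasCompactSupport (HasCompactSupport.of_compactSpace fa)
  have hfbI : Integrable fb (sphereProb n) :=
    hfbC.integrable_of_hasCompactSupport (HasCompactSupport.of_compactSpace fb)
  have hfcI : Integrable fc (sphereProb n) :=
    hfcC.integrable_of_hasCompactSupport (HasCompactSupport.of_compactSpace fc)
  have hT0 : 0 ≤ ∫ u, |fa u - fb u| ∂(sphereProb n) :=
    integral_nonneg fun u => abs_nonneg _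
  have hD0 : 0 ≤ unitBallVolume n := ENNReal.toReal_nonneg
  have hpoint : ∀ u, fa u + fb u - 2 * fc u = (if 0 < q then 1 else -1) * |fa u - fb u| := by
    intro u
    rw [hfc_def]
    simp only
    rw [Stmt5Aux.radialFn_inter hKcp hKcv hKint hLcp hLcv hLint (huS u)]
    exact Stmt5Aux.pointwise_rpow _ _ (hposK u) (hposL u) hq0
  have hXeq : dualVolHigh n q K + dualVolHigh n q L - 2 * dualVolHigh n q (K ∩ L)
      = unitBallVolume n * ((if 0 < q then 1 else -1) * ∫ u, |fa u - fb u| ∂(sphereProb n)) := by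
    simp only [dualVolHigh]
    have h1 : unitBallVolume n * ∫ u, fa u ∂(sphereProb n)
        + unitBallVolume n * ∫ u, fb u ∂(sphereProb n)
        - 2 * (unitBallVolume n * ∫ u, fc u ∂(sphereProb n))
        = unitBallVolume n * ((∫ u, fa u ∂(sphereProb n)) + (∫ u, fb u ∂(sphereProb n))
          - 2 * ∫ u, fc u ∂(sphereProb n)) := by ring
    rw [h1]
    congr 1
    have h2 : ∫ u, (fa u + fb u - 2 * fc u) ∂(sphereProb n)
        = (∫ u, fa u ∂(sphereProb n)) + (∫ u, fb u ∂(sphereProb n))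
          - 2 * ∫ u, fc u ∂(sphereProb n) := by
      have h := integral_sub (hfaI.add hfbI) (hfcI.const_mul 2)
      simpa [integral_add hfaI hfbI, integral_const_mul] using h
    have h3 : ∫ u, (fa u + fb u - 2 * fc u) ∂(sphereProb n)
        = (if 0 < q then 1 else -1) * ∫ u, |fa u - fb u| ∂(sphereProb n) := by
      rw [← integral_const_mul]
      exact integral_congr_ae (Filter.Eventually.of_forall fun u => hpoint u)
    rw [← h2, h3]
  refine ⟨?_, ?_, ?_⟩
  · -- goal 1
    rw [hXeq]
    by_cases hqpos : 0 < q
    · rw [if_pos hqpos, one_mul, abs_of_nonneg (mul_nonneg hD0 hT0)]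
    · rw [if_neg hqpos]
      have : unitBallVolume n * (-1 * ∫ u, |fa u - fb u| ∂(sphereProb n))
          = -(unitBallVolume n * ∫ u, |fa u - fb u| ∂(sphereProb n)) := by ring
      rw [this, abs_neg, abs_of_nonneg (mul_nonneg hD0 hT0)]
  · -- goal 2
    set A : Set (EuclideanSpace ℝ (Fin n)) := symmDiff K L with hA_def
    have hA : MeasurableSet A := by
      rw [hA_def, Set.symmDiff_def]
      exact (hKcp.isClosed.measurableSet.diff hLcp.isClosed.measurableSet).union
        (hLcp.isClosed.measurableSet.diff hKcp.isClosed.measurableSet)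
    have hA0 : A ⊆ {(0 : EuclideanSpace ℝ (Fin n))}ᶜ := by
      intro x hx
      simp only [Set.mem_compl_iff, Set.mem_singleton_iff]
      rintro rfl
      rw [hA_def, Set.mem_symmDiff] at hx
      rcases hx with ⟨-, h2⟩ | ⟨-, h2⟩
      · exact h2 (interior_subset hLint)
      · exact h2 (interior_subset hKint)
    set f : EuclideanSpace ℝ (Fin n) → ℝ≥0∞ :=
      fun x => ENNReal.ofReal (‖x‖ ^ (q - (n:ℝ))) with hf_def
    have hf : Measurable f := (measurable_norm.pow_const (q - (n:ℝ))).ennreal_ofReal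
    set c : ℝ≥0∞ := (volume : Measure (EuclideanSpace ℝ (Fin n))).toSphere Set.univ with hc_def
    have hc_eq : c = (n : ℝ≥0∞) * volume (Metric.ball (0 : EuclideanSpace ℝ (Fin n)) 1) := by
      rw [hc_def, Measure.toSphere_apply_univ, hfr]
    have hc0 : c ≠ 0 := by
      rw [hc_eq]
      exact mul_ne_zero (by exact_mod_cast (by omega : n ≠ 0))
        (measure_ball_pos volume 0 one_pos).ne'
    have hctop : c ≠ ⊤ := measure_ne_top _ _
    set J : ℝ≥0∞ := ∫⁻ u, ENNReal.ofReal |fa u - fb u| ∂(sphereProb n) with hJ_def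
    have hΔmeas : Measurable fun u : Metric.sphere (0 : EuclideanSpace ℝ (Fin n)) 1 =>
        ENNReal.ofReal |fa u - fb u| := ((hfaC.sub hfbC).abs.measurable).ennreal_ofReal
    have hlhs : ∫ u, |fa u - fb u| ∂(sphereProb n) = J.toReal := by
      rw [hJ_def, integral_eq_lintegral_of_nonneg_ae (f := fun u => |fa u - fb u|)
        (Filter.Eventually.of_forall fun u => abs_nonneg _)
        (hfaC.sub hfbC).abs.aestronglyMeasurable]
    have hG : Measurable fun p : Metric.sphere (0 : EuclideanSpace ℝ (Fin n)) 1 × Ioi (0:ℝ) =>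
        A.indicator f ((p.2 : ℝ) • (p.1 : EuclideanSpace ℝ (Fin n))) :=
      (hf.indicator hA).comp
        ((measurable_subtype_coe.comp measurable_snd).smul
          (measurable_subtype_coe.comp measurable_fst))
    have hI : ∫⁻ x in A, f x ∂volume = (c * J) * ENNReal.ofReal |q|⁻¹ := by
      calc ∫⁻ x in A, f x ∂volume
          = ∫⁻ x in {(0 : EuclideanSpace ℝ (Fin n))}ᶜ, A.indicator f x ∂volume := by
            rw [lintegral_indicator hA, Measure.restrict_restrict hA,
              Set.inter_eq_left.mpr hA0]
        _ = ∫⁻ y : ({(0 : EuclideanSpace ℝ (Fin n))}ᶜ : Set (EuclideanSpace ℝ (Fin n))),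
              A.indicator f ↑y ∂(volume.comap Subtype.val) :=
            (lintegral_subtype_comap (measurableSet_singleton 0).compl (A.indicator f)).symm
        _ = ∫⁻ p : Metric.sphere (0 : EuclideanSpace ℝ (Fin n)) 1 × Ioi (0:ℝ),
              A.indicator f ((p.2 : ℝ) • (p.1 : EuclideanSpace ℝ (Fin n)))
              ∂((volume : Measure (EuclideanSpace ℝ (Fin n))).toSphere.prod
                (Measure.volumeIoiPow (Module.finrank ℝ (EuclideanSpace ℝ (Fin n)) - 1))) := by
            rw [← (volume : Measure (EuclideanSpace ℝ (Fin n))).measurePreserving_homeomorphUnitSphereProd.lintegral_comp hG]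
            refine lintegral_congr fun y => ?_
            congr 1
            simp only [homeomorphUnitSphereProd_apply_snd_coe,
              homeomorphUnitSphereProd_apply_fst_coe, smul_smul]
            rw [mul_inv_cancel₀ (norm_ne_zero_iff.2 (Set.mem_compl_singleton_iff.mp y.2)),
              one_smul]
        _ = ∫⁻ u : Metric.sphere (0 : EuclideanSpace ℝ (Fin n)) 1,
              ∫⁻ r : Ioi (0:ℝ), A.indicator f ((r : ℝ) • (u : EuclideanSpace ℝ (Fin n)))
              ∂(Measure.volumeIoiPow (n - 1))
              ∂((volume : Measure (EuclideanSpace ℝ (Fin n))).toSphere) := by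
            rw [hfr]
            exact lintegral_prod _ hG.aemeasurable
        _ = ∫⁻ u : Metric.sphere (0 : EuclideanSpace ℝ (Fin n)) 1,
              ENNReal.ofReal |fa u - fb u| * ENNReal.ofReal |q|⁻¹
              ∂((volume : Measure (EuclideanSpace ℝ (Fin n))).toSphere) := by
            refine lintegral_congr fun u => ?_
            rw [Stmt5Aux.inner_integral hn hKcp hKcv hKint hLcp hLcv hLint hq0 u,
              div_eq_mul_inv, ENNReal.ofReal_mul (abs_nonneg _)]
        _ = (∫⁻ u, ENNReal.ofReal |fa u - fb u|
              ∂((volume : Measure (EuclideanSpace ℝ (Fin n))).toSphere))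
              * ENNReal.ofReal |q|⁻¹ := lintegral_mul_const _ hΔmeas
        _ = (c * J) * ENNReal.ofReal |q|⁻¹ := by
            congr 1
            have h2 : J = c⁻¹ * ∫⁻ u, ENNReal.ofReal |fa u - fb u|
                ∂((volume : Measure (EuclideanSpace ℝ (Fin n))).toSphere) := by
              rw [hJ_def, sphereProb, lintegral_smul_measure, smul_eq_mul, hc_def]
            rw [h2, ← mul_assoc, ENNReal.mul_inv_cancel hc0 hctop, one_mul]
    have hrhs : ∫ x in A, ‖x‖ ^ (q - (n:ℝ)) ∂volume = ((c * J) * ENNReal.ofReal |q|⁻¹).toReal := by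
      rw [integral_eq_lintegral_of_nonneg_ae
        (Filter.Eventually.of_forall fun x => Real.rpow_nonneg (norm_nonneg x) _)
        (measurable_norm.pow_const (q - (n:ℝ))).aestronglyMeasurable, ← hI]
    have hcreal : c.toReal = n * unitBallVolume n := by
      rw [hc_eq, ENNReal.toReal_mul, ENNReal.toReal_natCast, unitBallVolume,
        Measure.addHaar_closedBall_eq_addHaar_ball]
    rw [hlhs, hrhs, ENNReal.toReal_mul, ENNReal.toReal_mul, ENNReal.toReal_ofReal
      (inv_nonneg.2 (abs_nonneg q)), hcreal]
    field_simp
  · -- goal 3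
    intro hq'
    rw [hXeq, if_pos (lt_of_le_of_lt hnR.le hq')]
    rw [one_mul]
    exact mul_nonneg hD0 hT0
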